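/- Let 1 < p < ∞ and let f : ℝ → ℝ be locally absolutely continuous with f, f' ∈ L^p(ℝ). Then sup over j ≥ 0 of 2^{j(1-1/p)}·(Σ_{ν ∈ ℤ} |2^j ∫ f h̃_{j,ν} dx|^p)^{1/p} ≤ C·‖f'‖_{L^p}, where C is a constant depending only on p. -/

import Mathlib

open MeasureTheory Real

/-- The Haar mother function `h = 𝟙_{[0,1/2)} - 𝟙_{[1/2,1)}`. -/
noncomputable def haar (x : ℝ) : ℝ :=
  if 0 ≤ x ∧ x < 1/2 then 1 else if 1/2 ≤ x ∧ x < 1 then -1 else 0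

open Set

lemma haar_pointwise (T δ : ℝ) (hT : 0 < T) (hδ : δ = 1 / (2 * T)) (ν : ℤ) (f : ℝ → ℝ)
    (x : ℝ) :
    f x * haar (T * x - (ν : ℝ) / 2) =
      (Ico ((ν:ℝ) * δ) ((ν:ℝ) * δ + δ)).indicator f x
        - (Ico ((ν:ℝ) * δ + δ) ((ν:ℝ) * δ + 2 * δ)).indicator f x := by
  have h2T : (0:ℝ) < 2 * T := by positivity
  have kle : ∀ c y : ℝ, c * δ ≤ y ↔ c / 2 ≤ T * y := by
    intro c y
    rw [hδ, mul_one_div, div_le_iff₀ h2T]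
    constructor <;> intro h <;> linarith
  have klt : ∀ c y : ℝ, y < c * δ ↔ T * y < c / 2 := by
    intro c y
    rw [hδ, mul_one_div, lt_div_iff₀ h2T]
    constructor <;> intro h <;> linarith
  have e1 : (ν:ℝ) * δ + δ = ((ν:ℝ) + 1) * δ := by ring
  have e2 : (ν:ℝ) * δ + 2 * δ = ((ν:ℝ) + 2) * δ := by ring
  have h1 : (0 ≤ T * x - (ν:ℝ) / 2 ∧ T * x - (ν:ℝ) / 2 < 1/2) ↔
      x ∈ Ico ((ν:ℝ) * δ) ((ν:ℝ) * δ + δ) := by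
    rw [mem_Ico, e1, kle, klt]
    constructor <;> rintro ⟨a, b⟩ <;> constructor <;> · push_cast at * ; linarith
  have h2 : (1/2 ≤ T * x - (ν:ℝ) / 2 ∧ T * x - (ν:ℝ) / 2 < 1) ↔
      x ∈ Ico ((ν:ℝ) * δ + δ) ((ν:ℝ) * δ + 2 * δ) := by
    rw [mem_Ico, e1, e2, kle, klt]
    constructor <;> rintro ⟨a, b⟩ <;> constructor <;> · push_cast at * ; linarith
  simp only [haar]
  split_ifs with hc1 hc2
  · have hx1 := h1.mp hc1
    have hx2 : x ∉ Ico ((ν:ℝ) * δ + δ) ((ν:ℝ) * δ + 2 * δ) := fun h =>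
      absurd h.1 (not_le.mpr hx1.2)
    rw [indicator_of_mem hx1, indicator_of_notMem hx2]; ring
  · have hx2 := h2.mp hc2
    have hx1 : x ∉ Ico ((ν:ℝ) * δ) ((ν:ℝ) * δ + δ) := fun h => hc1 (h1.mpr h)
    rw [indicator_of_notMem hx1, indicator_of_mem hx2]; ring
  · have hx1 : x ∉ Ico ((ν:ℝ) * δ) ((ν:ℝ) * δ + δ) := fun h => hc1 (h1.mpr h)
    have hx2 : x ∉ Ico ((ν:ℝ) * δ + δ) ((ν:ℝ) * δ + 2 * δ) := fun h => hc2 (h2.mpr h)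
    rw [indicator_of_notMem hx1, indicator_of_notMem hx2]; ring

lemma key_interval_bound (f f' : ℝ → ℝ) (hloc : LocallyIntegrable f' volume)
    (hftc : ∀ x : ℝ, f x = f 0 + ∫ t in (0:ℝ)..x, f' t)
    (a δ : ℝ) (hδ0 : 0 < δ) :
    |(∫ x in a..a+δ, f x) - (∫ x in a+δ..a+2*δ, f x)| ≤
      δ * ∫ x in Icc a (a+2*δ), |f' x| := by
  have hint : ∀ u v : ℝ, IntervalIntegrable f' volume u v := fun u v =>
    (hloc.integrableOn_isCompact isCompact_uIcc).intervalIntegrable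
  set F : ℝ → ℝ := fun x => ∫ t in (0:ℝ)..x, f' t with hF
  have hFc : Continuous F := intervalIntegral.continuous_primitive hint 0
  have hFint : ∀ u v : ℝ, IntervalIntegrable F volume u v := fun u v =>
    hFc.intervalIntegrable u v
  have hFd : Continuous fun x => F (x + δ) := hFc.comp (continuous_add_right δ)
  have hf1 : (∫ x in a..a+δ, f x) = δ * f 0 + ∫ x in a..a+δ, F x := by
    rw [intervalIntegral.integral_congr (g := fun x => f 0 + F x) (fun x _ => hftc x),
      intervalIntegral.integral_add (intervalIntegrable_const) (hFint _ _),
      intervalIntegral.integral_const, smul_eq_mul]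
    ring
  have hf2 : (∫ x in a+δ..a+2*δ, f x) = δ * f 0 + ∫ x in a+δ..a+2*δ, F x := by
    rw [intervalIntegral.integral_congr (g := fun x => f 0 + F x) (fun x _ => hftc x),
      intervalIntegral.integral_add (intervalIntegrable_const) (hFint _ _),
      intervalIntegral.integral_const, smul_eq_mul]
    ring
  have hshift : (∫ x in a+δ..a+2*δ, F x) = ∫ x in a..a+δ, F (x + δ) := by
    rw [intervalIntegral.integral_comp_add_right]
    congr 1; ring
  have hdiff : (∫ x in a..a+δ, f x) - (∫ x in a+δ..a+2*δ, f x)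
      = ∫ x in a..a+δ, (F x - F (x + δ)) := by
    rw [hf1, hf2, hshift, intervalIntegral.integral_sub (hFint _ _) (hFd.intervalIntegrable _ _)]
    ring
  set M : ℝ := ∫ x in Icc a (a+2*δ), |f' x| with hM
  have hIntAbs : IntegrableOn (fun x => |f' x|) (Icc a (a+2*δ)) volume :=
    (hloc.integrableOn_isCompact isCompact_Icc).abs
  have hptbd : ∀ x ∈ Set.uIoc a (a+δ), ‖F x - F (x + δ)‖ ≤ M := by
    intro x hx
    rw [Set.uIoc_of_le (by linarith)] at hx
    have h1 : F (x + δ) - F x = ∫ t in x..x+δ, f' t := by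
      have h := intervalIntegral.integral_add_adjacent_intervals (hint 0 x) (hint x (x+δ))
      simp only [hF]
      linarith [h]
    have h2 : ‖F x - F (x + δ)‖ = |∫ t in x..x+δ, f' t| := by
      rw [Real.norm_eq_abs, abs_sub_comm, h1]
    rw [h2]
    calc |∫ t in x..x+δ, f' t| ≤ ∫ t in x..x+δ, |f' t| :=
          intervalIntegral.abs_integral_le_integral_abs (by linarith)
      _ = ∫ t in Ioc x (x+δ), |f' t| := intervalIntegral.integral_of_le (by linarith)
      _ ≤ M := by
          apply setIntegral_mono_set hIntAbs (ae_of_all _ fun t => abs_nonneg _)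
          apply HasSubset.Subset.eventuallyLE
          intro t ht
          exact ⟨by rcases hx with ⟨hx1, _⟩; rcases ht with ⟨ht1, _⟩; linarith,
            by rcases hx with ⟨_, hx2⟩; rcases ht with ⟨_, ht2⟩; linarith⟩
  have hbd := intervalIntegral.norm_integral_le_of_norm_le_const hptbd
  rw [hdiff]
  rw [Real.norm_eq_abs] at hbd
  have h3 : |a + δ - a| = δ := by rw [abs_of_pos (by linarith)]; ring
  rw [h3] at hbd
  linarith [hbd]

lemma holder_interval (p q : ℝ) (hpq : p.HolderConjugate q) (f' : ℝ → ℝ)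
    (hf'p : MemLp f' (ENNReal.ofReal p) volume) (a b : ℝ) (hab : a ≤ b) :
    (∫ x in Icc a b, |f' x|) ≤
      (∫ x in Icc a b, |f' x| ^ p) ^ (1/p) * (b - a) ^ (1/q) := by
  haveI : IsFiniteMeasure (volume.restrict (Icc a b)) :=
    ⟨by rw [Measure.restrict_apply_univ]; exact measure_Icc_lt_top⟩
  have hf'r : MemLp (fun x => |f' x|) (ENNReal.ofReal p) (volume.restrict (Icc a b)) := by
    simpa [Real.norm_eq_abs] using (hf'p.restrict (Icc a b)).norm
  have h1mem : MemLp (fun _ : ℝ => (1:ℝ)) (ENNReal.ofReal q) (volume.restrict (Icc a b)) :=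
    memLp_const 1
  have hH := integral_mul_le_Lp_mul_Lq_of_nonneg hpq
    (ae_of_all _ fun x => abs_nonneg (f' x)) (ae_of_all _ fun _ => zero_le_one) hf'r h1mem
  simp only [mul_one, Real.one_rpow] at hH
  have hvol : (∫ _x in Icc a b, (1:ℝ)) = b - a := by
    rw [setIntegral_const, Real.volume_real_Icc_of_le hab, smul_eq_mul, mul_one]
  rw [hvol] at hH
  exact hH

lemma sum_Ico_le (g : ℝ → ℝ) (hgint : Integrable g volume) (hgnn : ∀ x, 0 ≤ g x)
    (δ : ℝ) (hδ0 : 0 < δ) (s : Finset ℤ) :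
    ∑ ν ∈ s, (∫ x in Ico ((ν:ℝ)*δ) ((ν:ℝ)*δ + 2*δ), g x) ≤ 2 * ∫ x, g x := by
  set aa : ℤ → ℝ := fun ν => ∫ x in Ico ((ν:ℝ)*δ) ((ν:ℝ)*δ + δ), g x with haa
  have hsplit : ∀ ν : ℤ, (∫ x in Ico ((ν:ℝ)*δ) ((ν:ℝ)*δ + 2*δ), g x) = aa ν + aa (ν+1) := by
    intro ν
    have h1 : ((ν+1:ℤ):ℝ) * δ = (ν:ℝ)*δ + δ := by push_cast; ring
    have h2 : ((ν+1:ℤ):ℝ) * δ + δ = (ν:ℝ)*δ + 2*δ := by push_cast; ring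
    rw [haa]
    simp only [h1, h2]
    rw [← setIntegral_union Ico_disjoint_Ico_same measurableSet_Ico
      hgint.integrableOn hgint.integrableOn,
      Set.Ico_union_Ico_eq_Ico (by linarith) (by linarith)]
    rw [show (ν:ℝ)*δ + δ + δ = (ν:ℝ)*δ + 2*δ by ring]
  have hpart : ∀ t : Finset ℤ, (∑ ν ∈ t, aa ν) ≤ ∫ x, g x := by
    intro t
    have hpd : Set.Pairwise (↑t) (Function.onFun Disjoint
        fun ν : ℤ => Ico ((ν:ℝ)*δ) ((ν:ℝ)*δ + δ)) := by
      intro i _ j _ hij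
      have hij' : (i:ℝ) ≠ (j:ℝ) := by exact_mod_cast hij
      simp only [Function.onFun]
      rw [Set.Ico_disjoint_Ico]
      rcases hij'.lt_or_gt with h | h
      · have : (i:ℝ) + 1 ≤ j := by exact_mod_cast Int.lt_iff_add_one_le.mp (by exact_mod_cast h)
        calc min ((i:ℝ)*δ + δ) ((j:ℝ)*δ + δ) ≤ (i:ℝ)*δ + δ := min_le_left _ _
          _ ≤ (j:ℝ)*δ := by nlinarith
          _ ≤ max ((i:ℝ)*δ) ((j:ℝ)*δ) := le_max_right _ _
      · have : (j:ℝ) + 1 ≤ i := by exact_mod_cast Int.lt_iff_add_one_le.mp (by exact_mod_cast h)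
        calc min ((i:ℝ)*δ + δ) ((j:ℝ)*δ + δ) ≤ (j:ℝ)*δ + δ := min_le_right _ _
          _ ≤ (i:ℝ)*δ := by nlinarith
          _ ≤ max ((i:ℝ)*δ) ((j:ℝ)*δ) := le_max_left _ _
    rw [← integral_biUnion_finset t (fun i _ => measurableSet_Ico) hpd
      (fun i _ => hgint.integrableOn)]
    exact setIntegral_le_integral hgint (ae_of_all _ hgnn)
  have hshiftsum : (∑ ν ∈ s, aa (ν+1)) ≤ ∫ x, g x := by
    rw [show (∑ ν ∈ s, aa (ν+1)) = ∑ μ ∈ s.image (· + 1), aa μ from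
      (Finset.sum_image (by intro x _ y _ h; exact add_right_cancel h)).symm]
    exact hpart _
  calc ∑ ν ∈ s, (∫ x in Ico ((ν:ℝ)*δ) ((ν:ℝ)*δ + 2*δ), g x)
      = ∑ ν ∈ s, (aa ν + aa (ν+1)) := Finset.sum_congr rfl fun ν _ => hsplit ν
    _ = (∑ ν ∈ s, aa ν) + ∑ ν ∈ s, aa (ν+1) := Finset.sum_add_distrib
    _ ≤ (∫ x, g x) + ∫ x, g x := add_le_add (hpart s) hshiftsum
    _ = 2 * ∫ x, g x := by ring

/-- For `1 < p < ∞` and `f` locally absolutely continuous with `f, f' ∈ L^p`: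
`sup_j 2^{j(1-1/p)} (Σ_ν |2^j ∫ f h̃_{j,ν}|^p)^{1/p} ≤ C ‖f'‖_p` with `C = C(p)`. -/
theorem shifted_haar_sup_bound (p : ℝ) (hp : 1 < p) :
    ∃ C : ℝ, 0 < C ∧
      ∀ (f f' : ℝ → ℝ),
        (∀ x : ℝ, f x = f 0 + ∫ t in (0:ℝ)..x, f' t) →
        LocallyIntegrable f' volume →
        MemLp f (ENNReal.ofReal p) volume →
        MemLp f' (ENNReal.ofReal p) volume →
        ∀ j : ℕ,
          2 ^ ((j:ℝ) * (1 - 1/p)) *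
              (∑' ν : ℤ, |2 ^ j * ∫ x : ℝ, f x * haar (2 ^ j * x - (ν : ℝ) / 2)| ^ p) ^ (1/p)
            ≤ C * (∫ x : ℝ, |f' x| ^ p) ^ (1/p) := by
  have hp0 : 0 < p := lt_trans one_pos hp
  set q : ℝ := p / (p - 1) with hqdef
  have hpq : p.HolderConjugate q := Real.HolderConjugate.conjExponent hp
  have hq1 : 1/q = 1 - 1/p := by
    rw [hqdef]
    field_simp
  refine ⟨1, one_pos, ?_⟩
  intro f f' hftc hloc hfp hf'p j
  set I : ℝ := ∫ x : ℝ, |f' x| ^ p with hIdef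
  have hI0 : 0 ≤ I := integral_nonneg fun x => rpow_nonneg (abs_nonneg _) _
  set g : ℝ → ℝ := fun x => |f' x| ^ p with hgdef
  have hgnn : ∀ x, 0 ≤ g x := fun x => rpow_nonneg (abs_nonneg _) _
  have hgint : Integrable g volume := by
    have h := hf'p.integrable_norm_rpow (by simp [hp0]) (by simp)
    simpa [hgdef, Real.norm_eq_abs, ENNReal.toReal_ofReal hp0.le] using h
  set T : ℝ := 2 ^ j with hTdef
  have hT : (0:ℝ) < T := by rw [hTdef]; positivity
  set δ : ℝ := 1 / (2 * T) with hδdef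
  have hδ0 : (0:ℝ) < δ := by rw [hδdef]; positivity
  have hTδ : T * δ = 1/2 := by rw [hδdef]; field_simp
  -- continuity of f
  have hint : ∀ u v : ℝ, IntervalIntegrable f' volume u v := fun u v =>
    (hloc.integrableOn_isCompact isCompact_uIcc).intervalIntegrable
  have hfc : Continuous f := by
    have : f = fun x => f 0 + ∫ t in (0:ℝ)..x, f' t := funext hftc
    rw [this]
    exact continuous_const.add (intervalIntegral.continuous_primitive hint 0)
  -- Step A: representation of the Haar coefficient
  have hrepr : ∀ ν : ℤ, (∫ x : ℝ, f x * haar (T * x - (ν:ℝ)/2))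
      = (∫ x in ((ν:ℝ)*δ)..((ν:ℝ)*δ+δ), f x) - ∫ x in ((ν:ℝ)*δ+δ)..((ν:ℝ)*δ+2*δ), f x := by
    intro ν
    have hIA : IntegrableOn f (Ico ((ν:ℝ)*δ) ((ν:ℝ)*δ+δ)) volume :=
      (hfc.integrableOn_Icc).mono_set Ico_subset_Icc_self
    have hIB : IntegrableOn f (Ico ((ν:ℝ)*δ+δ) ((ν:ℝ)*δ+2*δ)) volume :=
      (hfc.integrableOn_Icc).mono_set Ico_subset_Icc_self
    calc (∫ x : ℝ, f x * haar (T * x - (ν:ℝ)/2))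
        = ∫ x : ℝ, ((Ico ((ν:ℝ)*δ) ((ν:ℝ)*δ+δ)).indicator f x
            - (Ico ((ν:ℝ)*δ+δ) ((ν:ℝ)*δ+2*δ)).indicator f x) :=
          integral_congr_ae (ae_of_all _ fun x => haar_pointwise T δ hT hδdef ν f x)
      _ = (∫ x : ℝ, (Ico ((ν:ℝ)*δ) ((ν:ℝ)*δ+δ)).indicator f x)
            - ∫ x : ℝ, (Ico ((ν:ℝ)*δ+δ) ((ν:ℝ)*δ+2*δ)).indicator f x :=
          integral_sub (hIA.integrable_indicator measurableSet_Ico)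
            (hIB.integrable_indicator measurableSet_Ico)
      _ = (∫ x in Ico ((ν:ℝ)*δ) ((ν:ℝ)*δ+δ), f x)
            - ∫ x in Ico ((ν:ℝ)*δ+δ) ((ν:ℝ)*δ+2*δ), f x := by
          rw [integral_indicator measurableSet_Ico, integral_indicator measurableSet_Ico]
      _ = (∫ x in ((ν:ℝ)*δ)..((ν:ℝ)*δ+δ), f x) - ∫ x in ((ν:ℝ)*δ+δ)..((ν:ℝ)*δ+2*δ), f x := by
          rw [setIntegral_congr_set Ico_ae_eq_Ioc, setIntegral_congr_set Ico_ae_eq_Ioc,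
            ← intervalIntegral.integral_of_le (by linarith),
            ← intervalIntegral.integral_of_le (by linarith)]
  -- Step B+C: key bound for each coefficient
  have hkey : ∀ ν : ℤ, |T * ∫ x : ℝ, f x * haar (T * x - (ν:ℝ)/2)| ≤
      (1/2) * ((∫ x in Icc ((ν:ℝ)*δ) ((ν:ℝ)*δ+2*δ), g x) ^ (1/p) * (2*δ) ^ (1/q)) := by
    intro ν
    have hB := key_interval_bound f f' hloc hftc ((ν:ℝ)*δ) δ hδ0
    have hC := holder_interval p q hpq f' hf'p ((ν:ℝ)*δ) ((ν:ℝ)*δ+2*δ) (by linarith)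
    rw [show (ν:ℝ)*δ + 2*δ - (ν:ℝ)*δ = 2*δ by ring] at hC
    have hMnn : (0:ℝ) ≤ ∫ x in Icc ((ν:ℝ)*δ) ((ν:ℝ)*δ+2*δ), |f' x| :=
      setIntegral_nonneg measurableSet_Icc fun x _ => abs_nonneg _
    calc |T * ∫ x : ℝ, f x * haar (T * x - (ν:ℝ)/2)|
        = T * |∫ x : ℝ, f x * haar (T * x - (ν:ℝ)/2)| := by
          rw [abs_mul, abs_of_pos hT]
      _ ≤ T * (δ * ∫ x in Icc ((ν:ℝ)*δ) ((ν:ℝ)*δ+2*δ), |f' x|) := by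
          apply mul_le_mul_of_nonneg_left _ hT.le
          rw [hrepr ν]
          exact hB
      _ = (1/2) * ∫ x in Icc ((ν:ℝ)*δ) ((ν:ℝ)*δ+2*δ), |f' x| := by
          rw [← mul_assoc, hTδ]
      _ ≤ (1/2) * ((∫ x in Icc ((ν:ℝ)*δ) ((ν:ℝ)*δ+2*δ), g x) ^ (1/p) * (2*δ) ^ (1/q)) := by
          apply mul_le_mul_of_nonneg_left _ (by norm_num)
          exact hC
  -- Step D: p-th powers
  set c2 : ℝ := (1/2) ^ p * ((2*δ) ^ (1/q)) ^ p with hc2def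
  have hc2nn : 0 ≤ c2 := by positivity
  have hXle : ∀ ν : ℤ, |T * ∫ x : ℝ, f x * haar (T * x - (ν:ℝ)/2)| ^ p ≤
      c2 * ∫ x in Ico ((ν:ℝ)*δ) ((ν:ℝ)*δ+2*δ), g x := by
    intro ν
    have hPnn : (0:ℝ) ≤ ∫ x in Icc ((ν:ℝ)*δ) ((ν:ℝ)*δ+2*δ), g x :=
      setIntegral_nonneg measurableSet_Icc fun x _ => hgnn x
    have h1 := Real.rpow_le_rpow (abs_nonneg _) (hkey ν) hp0.le
    calc |T * ∫ x : ℝ, f x * haar (T * x - (ν:ℝ)/2)| ^ p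
        ≤ ((1/2) * ((∫ x in Icc ((ν:ℝ)*δ) ((ν:ℝ)*δ+2*δ), g x) ^ (1/p) * (2*δ) ^ (1/q))) ^ p :=
          h1
      _ = c2 * ∫ x in Icc ((ν:ℝ)*δ) ((ν:ℝ)*δ+2*δ), g x := by
          rw [Real.mul_rpow (by norm_num) (by positivity),
            Real.mul_rpow (by positivity) (by positivity),
            ← Real.rpow_mul hPnn, show (1/p) * p = 1 by field_simp,
            Real.rpow_one, hc2def]
          ring
      _ = c2 * ∫ x in Ico ((ν:ℝ)*δ) ((ν:ℝ)*δ+2*δ), g x := by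
          rw [integral_Icc_eq_integral_Ico]
  -- Step E: sum up
  have htsum : (∑' ν : ℤ, |T * ∫ x : ℝ, f x * haar (T * x - (ν:ℝ)/2)| ^ p) ≤ c2 * (2 * I) := by
    by_cases hs : Summable fun ν : ℤ => |T * ∫ x : ℝ, f x * haar (T * x - (ν:ℝ)/2)| ^ p
    · refine Summable.tsum_le_of_sum_le hs fun s => ?_
      calc ∑ ν ∈ s, |T * ∫ x : ℝ, f x * haar (T * x - (ν:ℝ)/2)| ^ p
          ≤ ∑ ν ∈ s, c2 * ∫ x in Ico ((ν:ℝ)*δ) ((ν:ℝ)*δ+2*δ), g x :=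
            Finset.sum_le_sum fun ν _ => hXle ν
        _ = c2 * ∑ ν ∈ s, ∫ x in Ico ((ν:ℝ)*δ) ((ν:ℝ)*δ+2*δ), g x := by
            rw [Finset.mul_sum]
        _ ≤ c2 * (2 * I) := by
            apply mul_le_mul_of_nonneg_left _ hc2nn
            exact sum_Ico_le g hgint hgnn δ hδ0 s
    · rw [tsum_eq_zero_of_not_summable hs]
      positivity
  -- final constant computation
  have hE : (2:ℝ) ^ ((j:ℝ) * (1 - 1/p)) * (2*δ) ^ (1/q) = 1 := by
    have h2δ : 2*δ = T⁻¹ := by rw [hδdef]; field_simp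
    rw [h2δ, hTdef, ← Real.rpow_natCast 2 j, ← Real.rpow_neg (by norm_num),
      ← Real.rpow_mul (by norm_num), ← Real.rpow_add (by norm_num)]
    rw [hq1]
    rw [show (j:ℝ) * (1 - 1/p) + -(j:ℝ) * (1 - 1/p) = 0 by ring, Real.rpow_zero]
  have htsum' : (∑' ν : ℤ, |T * ∫ x : ℝ, f x * haar (T * x - (ν:ℝ)/2)| ^ p) ^ (1/p) ≤
      (1/2) * ((2*δ) ^ (1/q)) * ((2:ℝ) ^ (1/p) * I ^ (1/p)) := by
    have h1 : (∑' ν : ℤ, |T * ∫ x : ℝ, f x * haar (T * x - (ν:ℝ)/2)| ^ p) ^ (1/p) ≤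
        (c2 * (2 * I)) ^ (1/p) :=
      Real.rpow_le_rpow (tsum_nonneg fun ν => rpow_nonneg (abs_nonneg _) _) htsum
        (by positivity)
    have h2 : (c2 * (2 * I)) ^ (1/p) = (1/2) * ((2*δ) ^ (1/q)) * ((2:ℝ) ^ (1/p) * I ^ (1/p)) := by
      rw [hc2def, Real.mul_rpow (by positivity) (by positivity),
        Real.mul_rpow (by positivity) (by positivity),
        Real.mul_rpow (by norm_num) hI0,
        ← Real.rpow_mul (by norm_num : (0:ℝ) ≤ 1/2),
        ← Real.rpow_mul (by positivity : (0:ℝ) ≤ (2*δ) ^ (1/q)),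
        show p * (1/p) = 1 by field_simp,
        Real.rpow_one, Real.rpow_one]
    rw [h2] at h1
    exact h1
  -- conclude
  calc 2 ^ ((j:ℝ) * (1 - 1/p)) *
      (∑' ν : ℤ, |T * ∫ x : ℝ, f x * haar (T * x - (ν:ℝ)/2)| ^ p) ^ (1/p)
      ≤ 2 ^ ((j:ℝ) * (1 - 1/p)) * ((1/2) * ((2*δ) ^ (1/q)) * ((2:ℝ) ^ (1/p) * I ^ (1/p))) := by
        apply mul_le_mul_of_nonneg_left htsum' (by positivity)
    _ = (2 ^ ((j:ℝ) * (1 - 1/p)) * (2*δ) ^ (1/q)) * ((1/2) * (2:ℝ) ^ (1/p) * I ^ (1/p)) := by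
        ring
    _ = (1/2) * (2:ℝ) ^ (1/p) * I ^ (1/p) := by rw [hE, one_mul]
    _ ≤ 1 * I ^ (1/p) := by
        apply mul_le_mul_of_nonneg_right _ (by positivity)
        have h2p : (2:ℝ) ^ (1/p) ≤ 2 := by
          calc (2:ℝ) ^ (1/p) ≤ (2:ℝ) ^ (1:ℝ) :=
                Real.rpow_le_rpow_of_exponent_le one_le_two
                  (by rw [div_le_one hp0]; linarith)
            _ = 2 := Real.rpow_one 2
        linarith
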